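/- Let ħ, m, e, B > 0, k_x, k_z ∈ ℝ and n ∈ ℕ; set ω_c = eB/m and y₀ = −ħ·k_x/(e·B), and define ψ : ℝ³ → ℂ by ψ(x,y,z) = exp(i(k_x·x + k_z·z))·exp(−eB(y − y₀)²/(2ħ))·He_n(√(2eB/ħ)·(y − y₀)). Then ψ is an eigenfunction of the Landau Hamiltonian: for all (x,y,z) ∈ ℝ³, (1/(2m))·[−ħ²(∂²ψ/∂x² + ∂²ψ/∂y² + ∂²ψ/∂z²) − 2iħeB·y·∂ψ/∂x + e²B²y²·ψ](x,y,z) = (ħ²k_z²/(2m) + ħω_c·(n + 1/2))·ψ(x,y,z). The discrete energies ħω_c(n + 1/2) are the Landau levels, degenerate in k_x. -/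

import Mathlib

open Polynomial

private lemma hermite_deriv_succ' : ∀ n : ℕ,
    derivative (hermite (n + 1)) = ((n : ℤ[X]) + 1) * hermite n := by
  intro n
  induction n with
  | zero => simp [hermite_one]
  | succ k ih =>
      rw [hermite_succ (k + 1), derivative_sub, derivative_mul, derivative_X, ih,
        derivative_mul, hermite_succ k]
      simp only [derivative_add, derivative_natCast, derivative_one, zero_add, add_zero,
        zero_mul, mul_zero]
      push_cast
      ring

private lemma hermite_ode' (n : ℕ) :
    derivative (derivative (hermite n)) =
      X * derivative (hermite n) - (n : ℤ[X]) * hermite n := by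
  cases n with
  | zero => simp
  | succ k =>
      rw [hermite_deriv_succ' k, derivative_mul,
        show hermite (k+1) = X * hermite k - derivative (hermite k) from hermite_succ k]
      simp only [derivative_add, derivative_natCast, derivative_one, zero_add, add_zero,
        zero_mul, mul_zero]
      push_cast
      ring

private lemma expPoly_hasDerivAt (a y₀ : ℝ) (P : ℝ[X]) (t : ℝ) :
    HasDerivAt
      (fun s : ℝ => Complex.exp (-((a * (s - y₀) ^ 2 : ℝ) : ℂ)) *
        Polynomial.aeval ((s - y₀ : ℝ) : ℂ) P)
      (Complex.exp (-((a * (t - y₀) ^ 2 : ℝ) : ℂ)) *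
        Polynomial.aeval ((t - y₀ : ℝ) : ℂ) (derivative P - C (2 * a) * X * P)) t := by
  have h1 : HasDerivAt (fun s : ℝ => s - y₀) 1 t := (hasDerivAt_id t).sub_const y₀
  have hq : HasDerivAt (fun s : ℝ => a * (s - y₀) ^ 2) (a * (2 * (t - y₀) ^ 1 * 1)) t :=
    (h1.pow 2).const_mul a
  have hexp := (hq.ofReal_comp.neg).cexp
  have hval : HasDerivAt (fun s : ℝ => ((s - y₀ : ℝ) : ℂ)) 1 t := by
    exact_mod_cast h1.ofReal_comp
  have hp : HasDerivAt (fun s : ℝ => Polynomial.aeval ((s - y₀ : ℝ) : ℂ) P)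
      (Polynomial.aeval ((t - y₀ : ℝ) : ℂ) (derivative P) * 1) t :=
    by exact HasDerivAt.comp (𝕜' := ℂ) t (P.hasDerivAt_aeval (((t - y₀ : ℝ) : ℂ))) hval
  have hmul := hexp.mul hp
  convert hmul using 1
  · rfl
  · rfl
  simp only [Function.comp, Pi.neg_apply, map_sub, map_mul, aeval_C, aeval_X, Complex.coe_algebraMap]
  push_cast
  ring

private lemma aeval_key (a cc : ℝ) (n : ℕ) (hc : (cc : ℂ) ^ 2 = 4 * a) (w : ℂ) :
    Polynomial.aeval w
        (derivative (derivative (((hermite n).map (algebraMap ℤ ℝ)).comp (C cc * X))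
            - C (2 * a) * X * (((hermite n).map (algebraMap ℤ ℝ)).comp (C cc * X)))
          - C (2 * a) * X *
            (derivative (((hermite n).map (algebraMap ℤ ℝ)).comp (C cc * X))
              - C (2 * a) * X * (((hermite n).map (algebraMap ℤ ℝ)).comp (C cc * X))))
      = (4 * (a : ℂ) ^ 2 * w ^ 2 - 2 * a * (2 * n + 1)) *
          Polynomial.aeval w (((hermite n).map (algebraMap ℤ ℝ)).comp (C cc * X)) := by
  set H : ℝ[X] := (hermite n).map (algebraMap ℤ ℝ) with hH
  have hd1 : derivative (H.comp (C cc * X)) = C cc * (derivative H).comp (C cc * X) := by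
    rw [derivative_comp]; simp
  have hd2 : derivative ((derivative H).comp (C cc * X))
      = C cc * (derivative (derivative H)).comp (C cc * X) := by
    rw [derivative_comp]; simp
  have hode : derivative (derivative H) = X * derivative H - C (n : ℝ) * H := by
    rw [hH, derivative_map, derivative_map, hermite_ode' n]
    simp [Polynomial.map_mul, Polynomial.map_sub, Polynomial.C_eq_natCast]
  rw [derivative_sub]
  simp only [derivative_mul, derivative_C, derivative_X, hd1, hd2, hode]
  simp only [map_sub, map_mul, map_add, aeval_C, aeval_X, aeval_comp,
    Complex.coe_algebraMap, zero_mul, one_mul, mul_one, zero_add, add_zero]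
  push_cast
  linear_combination (↑cc * w * Polynomial.aeval ((cc : ℂ) * w) (derivative H)
      - (n : ℂ) * Polynomial.aeval ((cc : ℂ) * w) H) * hc

set_option maxHeartbeats 1000000 in
theorem landau_levels
    (ℏ m e B k_x k_z : ℝ) (hℏ : 0 < ℏ) (hm : 0 < m) (he : 0 < e) (hB : 0 < B)
    (n : ℕ) (ω_c y₀ : ℝ)
    (hω : ω_c = e * B / m) (hy₀ : y₀ = -(ℏ * k_x) / (e * B))
    (ψ : ℝ → ℝ → ℝ → ℂ)
    (hψ : ∀ x y z : ℝ,
      ψ x y z =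
        Complex.exp (Complex.I * ((k_x * x + k_z * z : ℝ) : ℂ))
          * Complex.exp (-(((e * B * (y - y₀) ^ 2 / (2 * ℏ) : ℝ) : ℂ)))
          * Polynomial.aeval ((Real.sqrt (2 * e * B / ℏ) * (y - y₀) : ℝ) : ℂ)
              (Polynomial.hermite n)) :
    ∀ x y z : ℝ,
      (1 / (2 * (m : ℂ))) *
          (-(ℏ : ℂ) ^ 2 *
              (deriv (deriv (fun t : ℝ => ψ t y z)) x
                + deriv (deriv (fun t : ℝ => ψ x t z)) y
                + deriv (deriv (fun t : ℝ => ψ x y t)) z)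
            - 2 * Complex.I * (ℏ : ℂ) * (e : ℂ) * (B : ℂ) * (y : ℂ)
                * deriv (fun t : ℝ => ψ t y z) x
            + (e : ℂ) ^ 2 * (B : ℂ) ^ 2 * (y : ℂ) ^ 2 * ψ x y z)
        = ((ℏ ^ 2 * k_z ^ 2 / (2 * m) + ℏ * ω_c * ((n : ℝ) + 1 / 2) : ℝ) : ℂ) * ψ x y z := by
  intro x y z
  have hℏ' : (ℏ : ℂ) ≠ 0 := by exact_mod_cast hℏ.ne'
  have hc2 : ((Real.sqrt (2 * e * B / ℏ)) : ℂ) ^ 2 = 4 * ((e * B / (2 * ℏ) : ℝ) : ℂ) := by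
    have h0 : (Real.sqrt (2 * e * B / ℏ)) ^ 2 = 2 * e * B / ℏ := Real.sq_sqrt (by positivity)
    have h1 : ((Real.sqrt (2 * e * B / ℏ)) : ℂ) ^ 2 = (((2 * e * B / ℏ : ℝ)) : ℂ) := by
      exact_mod_cast congrArg (fun r : ℝ => (r : ℂ)) h0
    rw [h1]
    push_cast
    field_simp
    ring
  -- canonical form of ψ
  have hψeq : ∀ xx tt zz : ℝ, ψ xx tt zz = Complex.exp (Complex.I * ((k_x * xx + k_z * zz : ℝ) : ℂ)) * (Complex.exp (-(((e * B / (2 * ℏ)) * (tt - y₀) ^ 2 : ℝ) : ℂ)) * Polynomial.aeval ((tt - y₀ : ℝ) : ℂ) (((Polynomial.hermite n).map (algebraMap ℤ ℝ)).comp (C (Real.sqrt (2 * e * B / ℏ)) * X))) := by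
    intro xx tt zz
    rw [hψ, mul_assoc]
    congr 1
    congr 1
    · exact congrArg Complex.exp (by push_cast; ring)
    · rw [aeval_comp, aeval_map_algebraMap]
      congr 1
      simp only [map_mul, aeval_C, aeval_X, Complex.coe_algebraMap]
      push_cast
      ring
  -- x-direction
  have hE : ∀ t : ℝ, HasDerivAt (fun s : ℝ => Complex.exp (Complex.I * ((k_x * s + k_z * z : ℝ) : ℂ)))
      (Complex.I * k_x * Complex.exp (Complex.I * ((k_x * t + k_z * z : ℝ) : ℂ))) t := by
    intro t
    have h := ((((hasDerivAt_id t).const_mul k_x).add_const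
        (k_z * z)).ofReal_comp.const_mul Complex.I).cexp
    simp only [id_eq, mul_one] at h
    convert h using 1
    ring
  have hx : ∀ t : ℝ, HasDerivAt (fun s : ℝ => ψ s y z) (Complex.I * k_x * ψ t y z) t := by
    intro t
    have hfun : (fun s : ℝ => ψ s y z) = fun s : ℝ => Complex.exp (Complex.I * ((k_x * s + k_z * z : ℝ) : ℂ)) * (Complex.exp (-(((e * B / (2 * ℏ)) * (y - y₀) ^ 2 : ℝ) : ℂ)) * Polynomial.aeval ((y - y₀ : ℝ) : ℂ) (((Polynomial.hermite n).map (algebraMap ℤ ℝ)).comp (C (Real.sqrt (2 * e * B / ℏ)) * X))) :=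
      funext fun s => hψeq s y z
    rw [hfun, hψeq t y z]
    have h2 := (hE t).mul_const ((Complex.exp (-(((e * B / (2 * ℏ)) * (y - y₀) ^ 2 : ℝ) : ℂ)) * Polynomial.aeval ((y - y₀ : ℝ) : ℂ) (((Polynomial.hermite n).map (algebraMap ℤ ℝ)).comp (C (Real.sqrt (2 * e * B / ℏ)) * X))))
    convert h2 using 1
    · rfl
    ring
  have hdxfun : (deriv fun s : ℝ => ψ s y z) = fun t : ℝ => Complex.I * k_x * ψ t y z :=
    funext fun t => (hx t).deriv
  have hdxx : deriv (deriv fun s : ℝ => ψ s y z) x = -(k_x : ℂ) ^ 2 * ψ x y z := by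
    rw [hdxfun, ((hx x).const_mul (Complex.I * (k_x : ℂ))).deriv]
    linear_combination ((k_x : ℂ) ^ 2 * ψ x y z) * Complex.I_sq
  -- z-direction
  have hE' : ∀ t : ℝ, HasDerivAt (fun s : ℝ => Complex.exp (Complex.I * ((k_x * x + k_z * s : ℝ) : ℂ)))
      (Complex.I * k_z * Complex.exp (Complex.I * ((k_x * x + k_z * t : ℝ) : ℂ))) t := by
    intro t
    have h := ((((hasDerivAt_id t).const_mul k_z).const_add
        (k_x * x)).ofReal_comp.const_mul Complex.I).cexp
    simp only [id_eq, mul_one] at h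
    convert h using 1
    ring
  have hz : ∀ t : ℝ, HasDerivAt (fun s : ℝ => ψ x y s) (Complex.I * k_z * ψ x y t) t := by
    intro t
    have hfun : (fun s : ℝ => ψ x y s) = fun s : ℝ => Complex.exp (Complex.I * ((k_x * x + k_z * s : ℝ) : ℂ)) * (Complex.exp (-(((e * B / (2 * ℏ)) * (y - y₀) ^ 2 : ℝ) : ℂ)) * Polynomial.aeval ((y - y₀ : ℝ) : ℂ) (((Polynomial.hermite n).map (algebraMap ℤ ℝ)).comp (C (Real.sqrt (2 * e * B / ℏ)) * X))) :=
      funext fun s => hψeq x y s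
    rw [hfun, hψeq x y t]
    have h2 := (hE' t).mul_const ((Complex.exp (-(((e * B / (2 * ℏ)) * (y - y₀) ^ 2 : ℝ) : ℂ)) * Polynomial.aeval ((y - y₀ : ℝ) : ℂ) (((Polynomial.hermite n).map (algebraMap ℤ ℝ)).comp (C (Real.sqrt (2 * e * B / ℏ)) * X))))
    convert h2 using 1
    · rfl
    ring
  have hdzfun : (deriv fun s : ℝ => ψ x y s) = fun t : ℝ => Complex.I * k_z * ψ x y t :=
    funext fun t => (hz t).deriv
  have hdzz : deriv (deriv fun s : ℝ => ψ x y s) z = -(k_z : ℂ) ^ 2 * ψ x y z := by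
    rw [hdzfun, ((hz z).const_mul (Complex.I * (k_z : ℂ))).deriv]
    linear_combination ((k_z : ℂ) ^ 2 * ψ x y z) * Complex.I_sq
  -- y-direction
  have hy : ∀ t : ℝ, HasDerivAt (fun s : ℝ => ψ x s z)
      (Complex.exp (Complex.I * ((k_x * x + k_z * z : ℝ) : ℂ)) * (Complex.exp (-(((e * B / (2 * ℏ)) * (t - y₀) ^ 2 : ℝ) : ℂ)) * Polynomial.aeval ((t - y₀ : ℝ) : ℂ) (derivative (((Polynomial.hermite n).map (algebraMap ℤ ℝ)).comp (C (Real.sqrt (2 * e * B / ℏ)) * X)) - C (2 * (e * B / (2 * ℏ))) * X * (((Polynomial.hermite n).map (algebraMap ℤ ℝ)).comp (C (Real.sqrt (2 * e * B / ℏ)) * X))))) t := by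
    intro t
    have hfun : (fun s : ℝ => ψ x s z) = fun s : ℝ => Complex.exp (Complex.I * ((k_x * x + k_z * z : ℝ) : ℂ)) * (Complex.exp (-(((e * B / (2 * ℏ)) * (s - y₀) ^ 2 : ℝ) : ℂ)) * Polynomial.aeval ((s - y₀ : ℝ) : ℂ) (((Polynomial.hermite n).map (algebraMap ℤ ℝ)).comp (C (Real.sqrt (2 * e * B / ℏ)) * X))) :=
      funext fun s => hψeq x s z
    rw [hfun]
    exact (expPoly_hasDerivAt (e * B / (2 * ℏ)) y₀ (((Polynomial.hermite n).map (algebraMap ℤ ℝ)).comp (C (Real.sqrt (2 * e * B / ℏ)) * X)) t).const_mul _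
  have hdyfun : (deriv fun s : ℝ => ψ x s z)
      = fun t : ℝ => Complex.exp (Complex.I * ((k_x * x + k_z * z : ℝ) : ℂ)) * (Complex.exp (-(((e * B / (2 * ℏ)) * (t - y₀) ^ 2 : ℝ) : ℂ)) * Polynomial.aeval ((t - y₀ : ℝ) : ℂ) (derivative (((Polynomial.hermite n).map (algebraMap ℤ ℝ)).comp (C (Real.sqrt (2 * e * B / ℏ)) * X)) - C (2 * (e * B / (2 * ℏ))) * X * (((Polynomial.hermite n).map (algebraMap ℤ ℝ)).comp (C (Real.sqrt (2 * e * B / ℏ)) * X)))) :=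
    funext fun t => (hy t).deriv
  have hdyy : deriv (deriv fun s : ℝ => ψ x s z) y
      = (4 * ((e * B / (2 * ℏ)) : ℂ) ^ 2 * ((y : ℂ) - (y₀ : ℂ)) ^ 2
          - 2 * (e * B / (2 * ℏ)) * (2 * n + 1)) * ψ x y z := by
    rw [hdyfun, ((expPoly_hasDerivAt (e * B / (2 * ℏ)) y₀ (derivative (((Polynomial.hermite n).map (algebraMap ℤ ℝ)).comp (C (Real.sqrt (2 * e * B / ℏ)) * X)) - C (2 * (e * B / (2 * ℏ))) * X * (((Polynomial.hermite n).map (algebraMap ℤ ℝ)).comp (C (Real.sqrt (2 * e * B / ℏ)) * X))) y).const_mul (Complex.exp (Complex.I * ((k_x * x + k_z * z : ℝ) : ℂ)))).deriv,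
      hψeq x y z]
    rw [aeval_key (e * B / (2 * ℏ)) (Real.sqrt (2 * e * B / ℏ)) n hc2 (((y - y₀ : ℝ)) : ℂ)]
    push_cast
    ring
  rw [hdxx, hdyy, hdzz, (hx x).deriv]
  have hreal : 1 / (2 * m) * (ℏ ^ 2 * k_x ^ 2 + ℏ ^ 2 * k_z ^ 2
        - ℏ ^ 2 * (4 * (e * B / (2 * ℏ)) ^ 2 * (y - y₀) ^ 2
            - 2 * (e * B / (2 * ℏ)) * (2 * (n : ℝ) + 1))
        + 2 * ℏ * e * B * y * k_x + e ^ 2 * B ^ 2 * y ^ 2)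
      = ℏ ^ 2 * k_z ^ 2 / (2 * m) + ℏ * ω_c * ((n : ℝ) + 1 / 2) := by
    subst hy₀ hω
    field_simp
    ring
  have hrealC := congrArg (fun r : ℝ => (r : ℂ)) hreal
  push_cast at hrealC
  push_cast
  linear_combination (ψ x y z) * hrealC
    - (1 / (2 * (m : ℂ)) * (2 * (ℏ : ℂ) * e * B * y * k_x) * ψ x y z) * Complex.I_sq
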